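/- Let n ≥ 1, let z, b ∈ ℂ, and let ĥ_0, …, ĥ_{n−1} and h_1, …, h_n be nonzero complex numbers. Define the finite continued fraction R_n(z) from the inside out by C_n = 1/h_n, C_j = 1/( h_j + 1/( ĥ_j·z + C_{j+1} ) ) for j = n−1, …, 1, and R_n(z) = 1/( ĥ_0·z + C_1 ), assuming every denominator appearing in this recursion is nonzero. If complex numbers u_0, u_1, …, u_n satisfy u_n = 0, (1/ĥ_0)·( (u_1 − u_0)/h_1 + b ) = z·u_0, and (1/ĥ_j)·( (u_{j+1} − u_j)/h_{j+1} − (u_j − u_{j−1})/h_j ) = z·u_j for j = 1, …, n−1, then u_0 = R_n(z)·b. -/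

import Mathlib

theorem stmt14 (n : ℕ) (hn : 1 ≤ n) (z b : ℂ) (h hd : ℕ → ℂ)
    -- primal steps `h 1, …, h n` and dual steps `hd 0, …, hd (n-1)` are nonzero
    (hh : ∀ j, 1 ≤ j → j ≤ n → h j ≠ 0) (hhd : ∀ j, j < n → hd j ≠ 0)
    -- the inside-out continued fraction recursion `C n, C (n-1), …, C 1`
    (C : ℕ → ℂ) (hCn : C n = 1 / h n)
    (hCdenom1 : ∀ j, 1 ≤ j → j < n → hd j * z + C (j + 1) ≠ 0)
    (hCdenom2 : ∀ j, 1 ≤ j → j < n → h j + 1 / (hd j * z + C (j + 1)) ≠ 0)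
    (hC : ∀ j, 1 ≤ j → j < n → C j = 1 / (h j + 1 / (hd j * z + C (j + 1))))
    (hCdenom0 : hd 0 * z + C 1 ≠ 0)
    -- the finite difference solution
    (u : ℕ → ℂ) (hun : u n = 0)
    (hu0 : (1 / hd 0) * ((u 1 - u 0) / h 1 + b) = z * u 0)
    (huj : ∀ j, 1 ≤ j → j ≤ n - 1 →
      (1 / hd j) * ((u (j + 1) - u j) / h (j + 1) - (u j - u (j - 1)) / h j) = z * u j) :
    u 0 = (1 / (hd 0 * z + C 1)) * b := by
  have key : ∀ d j, 1 ≤ j → j + d = n →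
      C j ≠ 0 ∧ u (j - 1) = -(1 / C j) * ((u j - u (j - 1)) / h j) := by
    intro d
    induction d with
    | zero =>
      intro j hj1 hjn
      have hj : j = n := by omega
      subst hj
      have hhn : h j ≠ 0 := hh j hj1 le_rfl
      rw [hCn, hun]
      constructor
      · exact one_div_ne_zero hhn
      · field_simp; ring
    | succ d ih =>
      intro j hj1 hjd
      have hjn : j < n := by omega
      obtain ⟨hCne, hu'⟩ := ih (j + 1) (by omega) (by omega)
      simp only [Nat.add_sub_cancel] at hu'
      have hD : hd j * z + C (j + 1) ≠ 0 := hCdenom1 j hj1 hjn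
      have hE : h j + 1 / (hd j * z + C (j + 1)) ≠ 0 := hCdenom2 j hj1 hjn
      have hCj : C j = 1 / (h j + 1 / (hd j * z + C (j + 1))) := hC j hj1 hjn
      have hdj : hd j ≠ 0 := hhd j hjn
      have hhj : h j ≠ 0 := hh j hj1 (le_of_lt hjn)
      have hhj1 : h (j + 1) ≠ 0 := hh (j + 1) (by omega) (by omega)
      have hj_eq := huj j hj1 (by omega)
      have hI1 : (u (j + 1) - u j) / h (j + 1) = -(C (j + 1) * u j) := by
        field_simp at hu' ⊢
        linear_combination hu'
      rw [hI1] at hj_eq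
      have h2 : u j * (hd j * z + C (j + 1)) * h j = -(u j - u (j - 1)) := by
        field_simp at hj_eq
        linear_combination -hj_eq
      constructor
      · rw [hCj]; exact one_div_ne_zero hE
      · rw [hCj, one_div_one_div]
        field_simp
        linear_combination h2
  obtain ⟨hC1ne, hu0'⟩ := key (n - 1) 1 le_rfl (by omega)
  norm_num at hu0'
  have hd0 : hd 0 ≠ 0 := hhd 0 (by omega)
  have hh1 : h 1 ≠ 0 := hh 1 le_rfl hn
  have hI : (u 1 - u 0) / h 1 = -(C 1 * u 0) := by
    field_simp at hu0' ⊢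
    linear_combination hu0'
  rw [hI] at hu0
  field_simp at hu0 ⊢
  linear_combination -hu0
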